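/- Let t be a positive integer and let G be a graph such that every subgraph G' of G admits a walk-preserving overlay L = (H, f, ℓ) with the following properties: |V(H)| ≤ 2·|V(G')|; for every v ∈ V(G') there exists x ∈ f⁻¹(v) with ℓ(x) ≥ 1; and tw(H) ≤ t. Then every subgraph of G with at least one vertex has average degree at most 4t; consequently, every clique of G has at most 4t + 1 vertices and G has at most 2^{4t} · |V(G)| nonempty cliques. -/

import Mathlib

open SimpleGraph

section OverlayDefs

variable {V W T : Type}

/-- `f` is a graph homomorphism from `H` to `G` (edges map to edges). -/
def IsHomOn (H : SimpleGraph W) (G : SimpleGraph V) (f : W → V) : Prop :=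
  ∀ ⦃x y : W⦄, H.Adj x y → G.Adj (f x) (f y)

/-- The overlay `(H, f, ℓ)` of `G` is walk-preserving. -/
def WalkPres (H : SimpleGraph W) (G : SimpleGraph V) (f : W → V) (ℓ : W → ℕ) : Prop :=
  ∀ x : W, 1 ≤ ℓ x → ∀ w : V, G.Adj (f x) w →
    ∃ y : W, H.Adj x y ∧ f y = w ∧ ℓ x - 1 ≤ ℓ y

/-- `(H, f, ℓ)` is an `r`-neighborhood overlay of `G`. -/
def IsRNbhd (r : ℕ) (H : SimpleGraph W) (G : SimpleGraph V) (f : W → V) (ℓ : W → ℕ) : Prop :=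
  IsHomOn H G f ∧ WalkPres H G f ℓ ∧ (∀ x : W, ℓ x ≤ r) ∧ ∀ v : V, ∃ x : W, f x = v ∧ ℓ x = r

/-- `(Tr, β)` is a tree decomposition of `G`. -/
def IsTreeDecomp (G : SimpleGraph V) (Tr : SimpleGraph T) (β : T → Set V) : Prop :=
  Tr.IsTree ∧ (∀ ⦃u v : V⦄, G.Adj u v → ∃ t : T, u ∈ β t ∧ v ∈ β t) ∧
    ∀ v : V, (Tr.induce {t : T | v ∈ β t}).Connected

/-- The treewidth of `G` is at most `t`. -/
def HasTwLE (G : SimpleGraph V) (t : ℝ) : Prop :=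
  ∃ (T : Type) (Tr : SimpleGraph T) (β : T → Set V),
    IsTreeDecomp G Tr β ∧ ∀ s : T, ((β s).ncard : ℝ) ≤ t + 1

/-- An overlay of a (finite) graph `G`: a finite graph `H`, a homomorphism `f` from `H` to `G`,
and a function `ℓ` on the vertices of `H`. -/
structure Overlay (G : SimpleGraph V) : Type 1 where
  W : Type
  finW : Finite W
  H : SimpleGraph W
  f : W → V
  hom : IsHomOn H G f
  ell : W → ℕ

/-- The thickness `θ_L(v)` of an overlay at a vertex `v`: the number of preimages of `v`. -/
noncomputable def Overlay.thick {G : SimpleGraph V} (L : Overlay G) (v : V) : ℕ :=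
  Nat.card {x : L.W // L.f x = v}

/-- The overlay `L` is an `r`-neighborhood overlay. -/
def Overlay.IsRNbhdOv {G : SimpleGraph V} (L : Overlay G) (r : ℕ) : Prop :=
  IsRNbhd r L.H G L.f L.ell

/-- The thickness `θ_𝓛(v)` of a multiset of overlays at a vertex `v`. -/
noncomputable def mthick {G : SimpleGraph V} (𝓛 : Multiset (Overlay G)) (v : V) : ℝ :=
  (𝓛.map fun L => (L.thick v : ℝ)).sum / (Multiset.card 𝓛)

end OverlayDefs



variable {T : Type} {Tr : SimpleGraph T}

lemma pathInSet (S : Set T) (hS : (Tr.induce S).Connected) {a b : T} (ha : a ∈ S) (hb : b ∈ S) :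
    ∃ p : Tr.Walk a b, p.IsPath ∧ ∀ z ∈ p.support, z ∈ S := by
  classical
  obtain ⟨q⟩ := hS ⟨a, ha⟩ ⟨b, hb⟩
  let ι : Tr.induce S →g Tr := ⟨Subtype.val, fun h => h⟩
  refine ⟨(q.map ι).bypass, Walk.bypass_isPath _, fun z hz => ?_⟩
  have := Walk.support_bypass_subset _ hz
  rw [Walk.support_map] at this
  obtain ⟨z', _, rfl⟩ := List.mem_map.mp this
  exact z'.2

lemma geodesicPath (hc : Tr.Connected) (a r : T) :
    ∃ p : Tr.Walk a r, p.IsPath ∧ p.length = Tr.dist a r := by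
  classical
  obtain ⟨p, hp⟩ := (hc a r).exists_walk_length_eq_dist
  exact ⟨p.bypass, Walk.bypass_isPath _,
    le_antisymm (hp ▸ Walk.length_bypass_le _) (dist_le _)⟩

lemma internal_lt {a r z : T} (p : Tr.Walk a r) (hlen : p.length = Tr.dist a r)
    (hz : z ∈ p.support) (hne : z ≠ a) : Tr.dist z r < Tr.dist a r := by
  classical
  have hspec := p.take_spec hz
  have hlens : (p.takeUntil z hz).length + (p.dropUntil z hz).length = p.length := by
    conv_rhs => rw [← hspec]
    exact (Walk.length_append _ _).symm
  have h1 : Tr.dist z r ≤ (p.dropUntil z hz).length := dist_le _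
  have h2 : 1 ≤ (p.takeUntil z hz).length := by
    rcases Nat.eq_zero_or_pos (p.takeUntil z hz).length with h | h
    · exact absurd (Walk.eq_of_length_eq_zero h).symm hne
    · exact h
  omega

lemma appendPath {a m r : T} {p : Tr.Walk a m} {q : Tr.Walk m r} (hp : p.IsPath) (hq : q.IsPath)
    (hdisj : ∀ z, z ∈ p.support → z ∈ q.support → z = m) : (p.append q).IsPath := by
  rw [Walk.isPath_def, Walk.support_append]
  have hm : m ∉ q.support.tail := by
    have := hq.support_nodup
    rw [q.support_eq_cons] at this
    exact (List.nodup_cons.mp this).1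
  refine List.Nodup.append hp.support_nodup ?_ ?_
  · have := hq.support_nodup
    rw [q.support_eq_cons] at this
    exact (List.nodup_cons.mp this).2
  · intro x hxp hxq
    have hxq' : x ∈ q.support := List.mem_of_mem_tail hxq
    exact hm ((hdisj x hxp hxq') ▸ hxq)

lemma tw_key {T : Type} (Tr : SimpleGraph T) (β : T → Set W) (H : SimpleGraph W)
    (hTree : Tr.IsTree) (hEdge : ∀ ⦃u v : W⦄, H.Adj u v → ∃ s : T, u ∈ β s ∧ v ∈ β s)
    (hConn : ∀ v : W, (Tr.induce {s : T | v ∈ β s}).Connected) (r : T) :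
    ∃ (d : W → ℕ) (pick : W → T), (∀ v, v ∈ β (pick v)) ∧
      (∀ v u : W, H.Adj v u → d u ≤ d v → u ∈ β (pick v)) := by
  classical
  have hTc := hTree.isConnected
  have hUniq := isAcyclic_iff_path_unique.mp hTree.IsAcyclic
  set D : W → Set ℕ := fun v => (fun s => Tr.dist s r) '' {s | v ∈ β s} with hD
  have hDne : ∀ v, (D v).Nonempty := by
    intro v
    obtain ⟨s⟩ := (hConn v).nonempty
    exact ⟨_, ⟨s.1, s.2, rfl⟩⟩
  set d : W → ℕ := fun v => sInf (D v) with hd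
  have hex : ∀ v : W, ∃ s : T, v ∈ β s ∧ Tr.dist s r = d v := by
    intro v
    obtain ⟨s, hs, hds⟩ := Nat.sInf_mem (hDne v)
    exact ⟨s, hs, hds⟩
  choose pick hpick hdist using hex
  have hdle : ∀ (v : W) (s : T), v ∈ β s → d v ≤ Tr.dist s r :=
    fun v s hs => Nat.sInf_le ⟨s, hs, rfl⟩
  refine ⟨d, pick, hpick, ?_⟩
  intro v u hadj hdu
  obtain ⟨b, hvb, hub⟩ := hEdge hadj
  obtain ⟨pv, hpv, hpvS⟩ := pathInSet {s | v ∈ β s} (hConn v) hvb (hpick v)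
  obtain ⟨qv, hqv, hqvlen⟩ := geodesicPath hTc (pick v) r
  obtain ⟨pu, hpu, hpuS⟩ := pathInSet {s | u ∈ β s} (hConn u) hub (hpick u)
  obtain ⟨qu, hqu, hqulen⟩ := geodesicPath hTc (pick u) r
  have hdisjv : ∀ z, z ∈ pv.support → z ∈ qv.support → z = pick v := by
    intro z hzp hzq
    by_contra hne
    have h1 : d v ≤ Tr.dist z r := hdle v z (hpvS z hzp)
    have h2 : Tr.dist z r < Tr.dist (pick v) r := internal_lt qv hqvlen hzq hne
    rw [hdist v] at h2; omega
  have hdisju : ∀ z, z ∈ pu.support → z ∈ qu.support → z = pick u := by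
    intro z hzp hzq
    by_contra hne
    have h1 : d u ≤ Tr.dist z r := hdle u z (hpuS z hzp)
    have h2 : Tr.dist z r < Tr.dist (pick u) r := internal_lt qu hqulen hzq hne
    rw [hdist u] at h2; omega
  have hBv : (pv.append qv).IsPath := appendPath hpv hqv hdisjv
  have hBu : (pu.append qu).IsPath := appendPath hpu hqu hdisju
  have hEq : pv.append qv = pu.append qu := by
    have := hUniq ⟨pv.append qv, hBv⟩ ⟨pu.append qu, hBu⟩
    exact congrArg Subtype.val this
  have hmem : pick v ∈ (pv.append qv).support := by
    rw [Walk.support_append]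
    exact List.mem_append_left _ pv.end_mem_support
  rw [hEq, Walk.support_append] at hmem
  rcases List.mem_append.mp hmem with h | h
  · exact hpuS _ h
  · have hq : pick v ∈ qu.support := List.mem_of_mem_tail h
    have hne : pick v ≠ pick u := by
      intro heq
      have hx := hqu.support_nodup
      rw [qu.support_eq_cons] at hx
      rw [heq] at h
      exact (List.nodup_cons.mp hx).1 h
    have := internal_lt qu hqulen hq hne
    rw [hdist u, hdist v] at this
    omega

lemma tw_edge_bound {W : Type} [Finite W] (H : SimpleGraph W) (t : ℕ)
    (h : HasTwLE H t) : H.edgeSet.ncard ≤ t * Nat.card W := by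
  classical
  obtain ⟨T, Tr, β, ⟨hTree, hEdge, hConn⟩, hCard⟩ := h
  cases isEmpty_or_nonempty W with
  | inl hW =>
    have : H.edgeSet = ∅ := by
      ext e
      refine e.ind (fun x _ => ?_)
      exact isEmptyElim x
    simp [this]
  | inr hW =>
    haveI : Fintype W := Fintype.ofFinite W
    obtain ⟨v₀⟩ := hW
    obtain ⟨r⟩ := (hConn v₀).nonempty
    obtain ⟨d, pick, hpick, key⟩ := tw_key Tr β H hTree hEdge hConn r.1
    have hCard' : ∀ s : T, (β s).ncard ≤ t + 1 := by
      intro s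
      exact_mod_cast hCard s
    set Nv : W → Set W := fun v => {u | H.Adj v u ∧ d u ≤ d v} with hNv
    have hNcard : ∀ v, (Nv v).ncard ≤ t := by
      intro v
      have hsub : Nv v ⊆ β (pick v) \ {v} := by
        rintro u ⟨hadj, hdu⟩
        exact ⟨key v u hadj hdu, fun hu => hadj.ne' hu⟩
      calc (Nv v).ncard ≤ (β (pick v) \ {v}).ncard :=
            Set.ncard_le_ncard hsub (Set.toFinite _)
        _ = (β (pick v)).ncard - 1 :=
            Set.ncard_diff_singleton_of_mem (hpick v)
        _ ≤ t := by have := hCard' (pick v); omega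
    set Sv : W → Set (Sym2 W) := fun v => {e | ∃ u, e = s(u, v) ∧ u ∈ Nv v} with hSv
    have hSvcard : ∀ v, (Sv v).ncard ≤ t := by
      intro v
      have himg : Sv v ⊆ (fun u => s(u, v)) '' Nv v := by
        rintro e ⟨u, rfl, hu⟩
        exact ⟨u, hu, rfl⟩
      have hinj : Function.Injective (fun u : W => s(u, v)) := by
        intro a b hab
        simp only [Sym2.eq_iff] at hab
        rcases hab with ⟨h1, -⟩ | ⟨h1, h2⟩
        · exact h1
        · exact h1.trans h2
      calc (Sv v).ncard ≤ ((fun u => s(u, v)) '' Nv v).ncard :=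
            Set.ncard_le_ncard himg (Set.toFinite _)
        _ = (Nv v).ncard := Set.ncard_image_of_injective _ hinj
        _ ≤ t := hNcard v
    have hcover : H.edgeSet ⊆ ⋃ v : W, Sv v := by
      intro e he
      induction e with
      | h a b =>
        rw [mem_edgeSet] at he
        rcases le_total (d a) (d b) with hle | hle
        · exact Set.mem_iUnion.mpr ⟨b, ⟨a, rfl, he.symm, hle⟩⟩
        · exact Set.mem_iUnion.mpr ⟨a, ⟨b, Sym2.eq_swap, he, hle⟩⟩
    -- count
    have hfinE := H.edgeSet.toFinite
    have hstep : H.edgeSet.ncard ≤ ∑ v : W, (Sv v).ncard := by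
      have hsub : hfinE.toFinset ⊆ Finset.univ.biUnion (fun v => (Sv v).toFinite.toFinset) := by
        intro e he
        rw [Set.Finite.mem_toFinset] at he
        obtain ⟨s, ⟨v, rfl⟩, hv⟩ := hcover he
        exact Finset.mem_biUnion.mpr ⟨v, Finset.mem_univ v, (Set.Finite.mem_toFinset _).mpr hv⟩
      calc H.edgeSet.ncard = hfinE.toFinset.card := Set.ncard_eq_toFinset_card _ hfinE
        _ ≤ (Finset.univ.biUnion (fun v => (Sv v).toFinite.toFinset)).card :=
            Finset.card_le_card hsub
        _ ≤ ∑ v : W, ((Sv v).toFinite.toFinset).card := Finset.card_biUnion_le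
        _ = ∑ v : W, (Sv v).ncard := by
            refine Finset.sum_congr rfl fun v _ => ?_
            exact (Set.ncard_eq_toFinset_card _ _).symm
    calc H.edgeSet.ncard ≤ ∑ v : W, (Sv v).ncard := hstep
      _ ≤ ∑ _v : W, t := Finset.sum_le_sum fun v _ => hSvcard v
      _ = Fintype.card W * t := by simp [Finset.sum_const, mul_comm]
      _ = t * Nat.card W := by rw [Nat.card_eq_fintype_card, mul_comm]

lemma ncard_le_of_surjOn {α β : Type*} {f : α → β} {s : Set α} {t : Set β}
    (h : Set.SurjOn f s t) (hs : s.Finite) : t.ncard ≤ s.ncard := by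
  classical
  rcases t.eq_empty_or_nonempty with rfl | ⟨b₀, hb₀⟩
  · simp
  obtain ⟨a₀, -, -⟩ := h hb₀
  have g : ∀ b : β, ∃ a : α, b ∈ t → a ∈ s ∧ f a = b := by
    intro b
    by_cases hb : b ∈ t
    · obtain ⟨a, ha, hfa⟩ := h hb
      exact ⟨a, fun _ => ⟨ha, hfa⟩⟩
    · exact ⟨a₀, fun hbt => absurd hbt hb⟩
  choose g hg using g
  refine Set.ncard_le_ncard_of_injOn g (fun b hb => (hg b hb).1) ?_ hs
  intro b1 h1 b2 h2 hgeq
  rw [← (hg b1 h1).2, ← (hg b2 h2).2, hgeq]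

lemma subgraph_edge_bound {V : Type} [Fintype V] (G : SimpleGraph V) (t : ℕ)
    (G' : G.Subgraph) (L : Overlay G'.coe)
    (hwp : WalkPres L.H G'.coe L.f L.ell)
    (hsz : Nat.card L.W ≤ 2 * G'.verts.ncard)
    (hell : ∀ v : G'.verts, ∃ x : L.W, L.f x = v ∧ 1 ≤ L.ell x)
    (htw : HasTwLE L.H t) :
    G'.edgeSet.ncard ≤ 2 * t * G'.verts.ncard := by
  classical
  haveI := L.finW
  have h1 : G'.edgeSet.ncard = G'.coe.edgeSet.ncard := by
    have h0 := Subgraph.image_coe_edgeSet_coe G'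
    rw [← h0]
    exact Set.ncard_image_of_injective _ (Sym2.map.injective Subtype.coe_injective)
  have hsurj : Set.SurjOn (Sym2.map L.f) L.H.edgeSet G'.coe.edgeSet := by
    intro e he
    induction e with
    | h u w =>
      rw [mem_edgeSet] at he
      obtain ⟨x, hfx, hlx⟩ := hell u
      obtain ⟨y, hxy, hfy, -⟩ := hwp x hlx w (by rw [hfx]; exact he)
      exact ⟨s(x, y), hxy, by simp [Sym2.map_pair_eq, hfx, hfy]⟩
  have h2 : G'.coe.edgeSet.ncard ≤ L.H.edgeSet.ncard :=
    ncard_le_of_surjOn hsurj (Set.toFinite _)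
  have h3 : L.H.edgeSet.ncard ≤ t * Nat.card L.W := tw_edge_bound L.H t htw
  calc G'.edgeSet.ncard = G'.coe.edgeSet.ncard := h1
    _ ≤ L.H.edgeSet.ncard := h2
    _ ≤ t * Nat.card L.W := h3
    _ ≤ t * (2 * G'.verts.ncard) := Nat.mul_le_mul_left _ hsz
    _ = 2 * t * G'.verts.ncard := by ring

lemma avg_deg_bound {V : Type} [Fintype V] (G : SimpleGraph V) (t : ℕ)
    (hov : ∀ G' : G.Subgraph, ∃ L : Overlay G'.coe,
      WalkPres L.H G'.coe L.f L.ell ∧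
      Nat.card L.W ≤ 2 * G'.verts.ncard ∧
      (∀ v : G'.verts, ∃ x : L.W, L.f x = v ∧ 1 ≤ L.ell x) ∧
      HasTwLE L.H t) :
    ∀ G' : G.Subgraph, G'.verts.Nonempty →
      (2 * G'.edgeSet.ncard : ℝ) / G'.verts.ncard ≤ 4 * t := by
  intro G' hne
  obtain ⟨L, hwp, hsz, hell, htw⟩ := hov G'
  have hE := subgraph_edge_bound G t G' L hwp hsz hell htw
  have hn : 0 < G'.verts.ncard := (Set.ncard_pos (Set.toFinite _)).mpr hne
  have hn' : (0 : ℝ) < G'.verts.ncard := by exact_mod_cast hn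
  rw [div_le_iff₀ hn']
  have hE' : (G'.edgeSet.ncard : ℝ) ≤ 2 * t * G'.verts.ncard := by exact_mod_cast hE
  linarith

lemma clique_card_bound {V : Type} [Fintype V] (G : SimpleGraph V) (t : ℕ)
    (hsub : ∀ G' : G.Subgraph, G'.edgeSet.ncard ≤ 2 * t * G'.verts.ncard)
    (K : Set V) (hK : G.IsClique K) : K.ncard ≤ 4 * t + 1 := by
  classical
  by_cases hk2 : K.ncard ≤ 1
  · omega
  push_neg at hk2
  haveI : Fintype ↥K := K.toFinite.fintype
  set G' : G.Subgraph :=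
    { verts := K
      Adj := fun a b => a ∈ K ∧ b ∈ K ∧ G.Adj a b
      adj_sub := fun h => h.2.2
      edge_vert := fun h => h.1
      symm := ⟨fun a b h => ⟨h.2.1, h.1, h.2.2.symm⟩⟩ } with hG'
  have hcoe : G'.coe = (⊤ : SimpleGraph ↥K) := by
    ext a b
    simp only [Subgraph.coe_adj, top_adj]
    constructor
    · intro h
      exact Subtype.coe_ne_coe.mp h.2.2.ne
    · intro hne
      exact ⟨a.2, b.2, hK a.2 b.2 (Subtype.coe_ne_coe.mpr hne)⟩
  have h1 : G'.edgeSet.ncard = G'.coe.edgeSet.ncard := by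
    have h0 := Subgraph.image_coe_edgeSet_coe G'
    rw [← h0]
    exact Set.ncard_image_of_injective _ (Sym2.map.injective Subtype.coe_injective)
  have h2 : G'.coe.edgeSet.ncard = (Fintype.card ↥K).choose 2 := by
    rw [hcoe, Set.ncard_eq_toFinset_card']
    exact card_edgeFinset_top_eq_card_choose_two
  have hcard : Fintype.card ↥K = K.ncard := by
    rw [Set.ncard_eq_toFinset_card', Set.toFinset_card]
  set k := K.ncard with hk
  have hE : k.choose 2 ≤ 2 * t * k := by
    have := hsub G'
    rw [h1, h2, hcard] at this
    exact this
  have hkk : k * (k - 1) = 2 * (k.choose 2) := by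
    rw [Nat.choose_two_right]
    rw [Nat.two_mul_div_two_of_even]
    exact Nat.even_mul_pred_self k
  have : k * (k - 1) ≤ (4 * t) * k := by
    calc k * (k - 1) = 2 * (k.choose 2) := hkk
      _ ≤ 2 * (2 * t * k) := by omega
      _ = (4 * t) * k := by ring
  have hk1 : k - 1 ≤ 4 * t := by
    have hkpos : 0 < k := by omega
    have := Nat.le_of_mul_le_mul_right (by linarith [this] : (k - 1) * k ≤ (4 * t) * k) hkpos
    exact this
  omega

lemma min_deg {V : Type} [Fintype V] (G : SimpleGraph V) (t : ℕ)
    (hsub : ∀ G' : G.Subgraph, G'.edgeSet.ncard ≤ 2 * t * G'.verts.ncard)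
    (S : Finset V) (hS : S.Nonempty) :
    ∃ v ∈ S, (G.neighborSet v ∩ ↑S).ncard ≤ 4 * t := by
  classical
  set G' : G.Subgraph :=
    { verts := ↑S
      Adj := fun a b => a ∈ S ∧ b ∈ S ∧ G.Adj a b
      adj_sub := fun h => h.2.2
      edge_vert := fun h => h.1
      symm := ⟨fun a b h => ⟨h.2.1, h.1, h.2.2.symm⟩⟩ } with hG'
  have h1 : G'.edgeSet.ncard = G'.coe.edgeSet.ncard := by
    have h0 := Subgraph.image_coe_edgeSet_coe G'
    rw [← h0]
    exact Set.ncard_image_of_injective _ (Sym2.map.injective Subtype.coe_injective)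
  have hE : G'.edgeSet.ncard ≤ 2 * t * S.card := by
    have := hsub G'
    rwa [show G'.verts = (↑S : Set V) from rfl, Set.ncard_coe_finset] at this
  by_contra hcon
  push_neg at hcon
  have hdeg : ∀ a : ↥(↑S : Set V), 4 * t + 1 ≤ G'.coe.degree a := by
    intro a
    have himg : Subtype.val '' (G'.coe.neighborSet a) = G.neighborSet ↑a ∩ ↑S := by
      ext b
      constructor
      · rintro ⟨x, hx, rfl⟩
        exact ⟨hx.2.2, hx.2.1⟩
      · rintro ⟨hadj, hbS⟩
        exact ⟨⟨b, hbS⟩, ⟨a.2, hbS, hadj⟩, rfl⟩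
    have hcnt : G'.coe.degree a = (G.neighborSet ↑a ∩ ↑S).ncard := by
      rw [← himg, Set.ncard_image_of_injective _ Subtype.coe_injective,
        Set.ncard_eq_toFinset_card']
      rfl
    rw [hcnt]
    exact hcon ↑a a.2
  have hsum : ∑ a : ↥(↑S : Set V), G'.coe.degree a = 2 * G'.coe.edgeFinset.card :=
    sum_degrees_eq_twice_card_edges _
  have hcoeE : G'.coe.edgeFinset.card = G'.coe.edgeSet.ncard :=
    (Set.ncard_eq_toFinset_card' _).symm
  have hScard : Fintype.card ↥(↑S : Set V) = S.card := by
    simp [Set.ncard_coe_finset, ← Nat.card_coe_set_eq, Nat.card_eq_fintype_card]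
  have hge : S.card * (4 * t + 1) ≤ 2 * (2 * t * S.card) := by
    calc S.card * (4 * t + 1) = ∑ _a : ↥(↑S : Set V), (4 * t + 1) := by
          rw [Finset.sum_const, smul_eq_mul, Finset.card_univ, hScard, mul_comm]
      _ ≤ ∑ a : ↥(↑S : Set V), G'.coe.degree a := Finset.sum_le_sum fun a _ => hdeg a
      _ = 2 * G'.coe.edgeFinset.card := hsum
      _ = 2 * G'.edgeSet.ncard := by rw [hcoeE, ← h1]
      _ ≤ 2 * (2 * t * S.card) := by omega
  have hpos : 0 < S.card := Finset.card_pos.mpr hS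
  nlinarith [hge, hpos]

lemma clique_count {V : Type} [Fintype V] (G : SimpleGraph V) (t : ℕ)
    (hmin : ∀ S : Finset V, S.Nonempty → ∃ v ∈ S, (G.neighborSet v ∩ ↑S).ncard ≤ 4 * t) :
    ∀ (n : ℕ) (S : Finset V), S.card ≤ n →
      {K : Set V | G.IsClique K ∧ K.Nonempty ∧ K ⊆ ↑S}.ncard ≤ 2 ^ (4 * t) * S.card := by
  classical
  intro n
  induction n with
  | zero =>
    intro S hcard
    have : S = ∅ := Finset.card_eq_zero.mp (Nat.le_zero.mp hcard)
    subst this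
    have hempty : {K : Set V | G.IsClique K ∧ K.Nonempty ∧ K ⊆ ↑(∅ : Finset V)} = ∅ := by
      ext K
      simp only [Finset.coe_empty, Set.subset_empty_iff, Set.mem_setOf_eq, Set.mem_empty_iff_false,
        iff_false, not_and]
      rintro - hne rfl
      exact Set.not_nonempty_empty hne
    rw [hempty]
    simp
  | succ n ih =>
    intro S hcard
    rcases S.eq_empty_or_nonempty with rfl | hS
    · have hempty : {K : Set V | G.IsClique K ∧ K.Nonempty ∧ K ⊆ ↑(∅ : Finset V)} = ∅ := by
        ext K
        simp only [Finset.coe_empty, Set.subset_empty_iff, Set.mem_setOf_eq,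
          Set.mem_empty_iff_false, iff_false, not_and]
        rintro - hne rfl
        exact Set.not_nonempty_empty hne
      rw [hempty]
      simp
    obtain ⟨v, hvS, hdeg⟩ := hmin S hS
    set S' := S.erase v with hS'
    have hS'card : S'.card = S.card - 1 := Finset.card_erase_of_mem hvS
    set A := {K : Set V | G.IsClique K ∧ K.Nonempty ∧ K ⊆ ↑S'} with hA
    set B := {K : Set V | G.IsClique K ∧ K ⊆ ↑S ∧ v ∈ K} with hB
    have hsplit : {K : Set V | G.IsClique K ∧ K.Nonempty ∧ K ⊆ ↑S} ⊆ A ∪ B := by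
      rintro K ⟨hc, hne, hsub⟩
      by_cases hv : v ∈ K
      · exact Or.inr ⟨hc, hsub, hv⟩
      · refine Or.inl ⟨hc, hne, fun u hu => ?_⟩
        refine Finset.mem_coe.mpr (Finset.mem_erase.mpr ⟨?_, hsub hu⟩)
        rintro rfl
        exact hv hu
    have hAcard : A.ncard ≤ 2 ^ (4 * t) * S'.card := ih S' (by omega)
    have hBcard : B.ncard ≤ 2 ^ (4 * t) := by
      set N : Set V := G.neighborSet v ∩ ↑S with hN
      set Φ : Set V → Finset V := fun K => (K \ {v}).toFinite.toFinset with hΦ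
      have hmaps : ∀ K ∈ B, Φ K ∈ N.toFinite.toFinset.powerset := by
        rintro K ⟨hc, hsub, hvK⟩
        rw [Finset.mem_powerset]
        intro u hu
        rw [Set.Finite.mem_toFinset] at hu ⊢
        obtain ⟨huK, hune⟩ := hu
        have hune' : u ≠ v := hune
        exact ⟨hc hvK huK (Ne.symm hune'), hsub huK⟩
      have hinj : Set.InjOn Φ B := by
        rintro K1 ⟨-, -, hv1⟩ K2 ⟨-, -, hv2⟩ heq
        have : K1 \ {v} = K2 \ {v} := by
          rwa [hΦ, Set.Finite.toFinset_inj] at heq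
        have e1 : K1 = insert v (K1 \ {v}) := by
          rw [Set.insert_diff_singleton, Set.insert_eq_self.mpr hv1]
        have e2 : K2 = insert v (K2 \ {v}) := by
          rw [Set.insert_diff_singleton, Set.insert_eq_self.mpr hv2]
        rw [e1, e2, this]
      calc B.ncard ≤ (↑(N.toFinite.toFinset.powerset) : Set (Finset V)).ncard :=
            Set.ncard_le_ncard_of_injOn Φ (fun K hK => hmaps K hK) hinj (Set.toFinite _)
        _ = (N.toFinite.toFinset.powerset).card := Set.ncard_coe_finset _
        _ = 2 ^ N.toFinite.toFinset.card := Finset.card_powerset _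
        _ = 2 ^ N.ncard := by rw [Set.ncard_eq_toFinset_card _ N.toFinite]
        _ ≤ 2 ^ (4 * t) := Nat.pow_le_pow_right (by norm_num) hdeg
    have hpos : 1 ≤ S.card := Finset.card_pos.mpr hS
    calc {K : Set V | G.IsClique K ∧ K.Nonempty ∧ K ⊆ ↑S}.ncard
        ≤ (A ∪ B).ncard := Set.ncard_le_ncard hsplit (Set.toFinite _)
      _ ≤ A.ncard + B.ncard := Set.ncard_union_le _ _
      _ ≤ 2 ^ (4 * t) * (S.card - 1) + 2 ^ (4 * t) := by
          rw [← hS'card]; omega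
      _ = 2 ^ (4 * t) * S.card := by
          have : S.card = (S.card - 1) + 1 := by omega
          conv_rhs => rw [this, Nat.mul_succ]


/-- Lemma 9 (lemma-nume): if every subgraph `G'` of `G` admits a walk-preserving overlay
`(H, f, ℓ)` with `|V(H)| ≤ 2|V(G')|`, every vertex having a preimage with positive `ℓ`, and
`tw(H) ≤ t`, then every nonempty subgraph of `G` has average degree at most `4t`; hence all
cliques of `G` have at most `4t + 1` vertices and `G` has at most `2^{4t}·|V(G)|` nonempty
cliques. -/
theorem stmt_19 {V : Type} [Fintype V] (G : SimpleGraph V) (t : ℕ) (ht : 0 < t)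
    (hov : ∀ G' : G.Subgraph, ∃ L : Overlay G'.coe,
      WalkPres L.H G'.coe L.f L.ell ∧
      Nat.card L.W ≤ 2 * G'.verts.ncard ∧
      (∀ v : G'.verts, ∃ x : L.W, L.f x = v ∧ 1 ≤ L.ell x) ∧
      HasTwLE L.H ↑t) :
    (∀ G' : G.Subgraph, G'.verts.Nonempty →
      (2 * G'.edgeSet.ncard : ℝ) / G'.verts.ncard ≤ 4 * t) ∧
    (∀ K : Set V, G.IsClique K → K.ncard ≤ 4 * t + 1) ∧
    {K : Set V | G.IsClique K ∧ K.Nonempty}.ncard ≤ 2 ^ (4 * t) * Fintype.card V := by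
  have hsub : ∀ G' : G.Subgraph, G'.edgeSet.ncard ≤ 2 * t * G'.verts.ncard := by
    intro G'
    obtain ⟨L, hwp, hsz, hell, htw⟩ := hov G'
    exact subgraph_edge_bound G t G' L hwp hsz hell htw
  refine ⟨avg_deg_bound G t hov, fun K hK => clique_card_bound G t hsub K hK, ?_⟩
  have hmin := min_deg G t hsub
  have hcount := clique_count G t hmin (Fintype.card V) Finset.univ (by simp)
  have hset : {K : Set V | G.IsClique K ∧ K.Nonempty} =
      {K : Set V | G.IsClique K ∧ K.Nonempty ∧ K ⊆ ↑(Finset.univ : Finset V)} := by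
    ext K
    simp
  rw [hset]
  calc {K : Set V | G.IsClique K ∧ K.Nonempty ∧ K ⊆ ↑(Finset.univ : Finset V)}.ncard
      ≤ 2 ^ (4 * t) * (Finset.univ : Finset V).card := hcount
    _ = 2 ^ (4 * t) * Fintype.card V := by rw [Finset.card_univ]
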